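/- There exists an absolute constant C > 0 such that the following holds. Let H = (V, 𝓔) be a finite hypergraph on n vertices that admits a hereditarily c-linear Delaunay graph (c > 0), and suppose every hyperedge of H has size at most k, where k ≥ 2. Then the number of unordered pairs of vertices of H that are friends is at most C·c·n·k. -/

import Mathlib

open Finset

lemma sum_pow_powerset {V : Type} [DecidableEq V] (U : Finset V) (p q : ℝ) :
    ∑ T ∈ U.powerset, p ^ T.card * q ^ (U.card - T.card) = (p + q) ^ U.card := by
  rw [← Finset.prod_const (b := p + q), Finset.prod_add]
  apply Finset.sum_congr rfl
  intro T hT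
  rw [Finset.mem_powerset] at hT
  rw [Finset.prod_const, Finset.prod_const, Finset.card_sdiff_of_subset hT]

lemma interval_weight {V : Type} [Fintype V] [DecidableEq V] (A B : Finset V)
    (hAB : Disjoint A B) (p q : ℝ) (hpq : p + q = 1) :
    ∑ S ∈ Finset.univ.filter (fun S : Finset V => A ⊆ S ∧ Disjoint S B),
      p ^ S.card * q ^ (Fintype.card V - S.card) = p ^ A.card * q ^ B.card := by
  classical
  set n := Fintype.card V with hn
  set U : Finset V := (Finset.univ \ A) \ B with hU
  have hcAB : A.card + B.card ≤ n := by
    rw [← Finset.card_union_of_disjoint hAB]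
    exact (Finset.card_le_univ _)
  have hBU : B ⊆ Finset.univ \ A := by
    intro x hx
    simp only [Finset.mem_sdiff, Finset.mem_univ, true_and]
    exact fun hxA => (Finset.disjoint_left.1 hAB) hxA hx
  have hUcard : U.card = n - A.card - B.card := by
    rw [hU, Finset.card_sdiff_of_subset hBU, Finset.card_sdiff_of_subset (Finset.subset_univ A), Finset.card_univ]
  have hTA : ∀ T : Finset V, T ⊆ U → Disjoint T A := by
    intro T hT
    rw [Finset.disjoint_left]
    intro x hxT hxA
    have := hT hxT
    simp only [hU, Finset.mem_sdiff, Finset.mem_univ, true_and] at this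
    exact this.1 hxA
  have hTB : ∀ T : Finset V, T ⊆ U → Disjoint T B := by
    intro T hT
    rw [Finset.disjoint_left]
    intro x hxT hxB
    have := hT hxT
    simp only [hU, Finset.mem_sdiff, Finset.mem_univ, true_and] at this
    exact this.2 hxB
  have key : ∑ S ∈ Finset.univ.filter (fun S : Finset V => A ⊆ S ∧ Disjoint S B),
      p ^ S.card * q ^ (n - S.card)
      = ∑ T ∈ U.powerset, p ^ (T.card + A.card) * q ^ (n - (T.card + A.card)) := by
    refine Finset.sum_nbij' (fun S => S \ A) (fun T => T ∪ A) ?_ ?_ ?_ ?_ ?_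
    · intro S hS
      simp only [Finset.mem_filter, Finset.mem_univ, true_and] at hS
      rw [Finset.mem_powerset]
      intro x hx
      rw [Finset.mem_sdiff] at hx
      simp only [hU, Finset.mem_sdiff, Finset.mem_univ, true_and]
      exact ⟨hx.2, fun hxB => (Finset.disjoint_left.1 hS.2) hx.1 hxB⟩
    · intro T hT
      rw [Finset.mem_powerset] at hT
      simp only [Finset.mem_filter, Finset.mem_univ, true_and]
      refine ⟨Finset.subset_union_right, ?_⟩
      rw [Finset.disjoint_union_left]
      exact ⟨hTB T hT, hAB⟩
    · intro S hS
      simp only [Finset.mem_filter, Finset.mem_univ, true_and] at hS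
      exact Finset.sdiff_union_of_subset hS.1
    · intro T hT
      rw [Finset.mem_powerset] at hT
      exact Finset.union_sdiff_cancel_right (hTA T hT)
    · intro S hS
      simp only [Finset.mem_filter, Finset.mem_univ, true_and] at hS
      rw [Finset.card_sdiff_of_subset hS.1, Nat.sub_add_cancel (Finset.card_le_card hS.1)]
  rw [key]
  have step : ∀ T ∈ U.powerset, p ^ (T.card + A.card) * q ^ (n - (T.card + A.card))
      = (p ^ A.card * q ^ B.card) * (p ^ T.card * q ^ (U.card - T.card)) := by
    intro T hT
    rw [Finset.mem_powerset] at hT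
    have hTc : T.card ≤ U.card := Finset.card_le_card hT
    have harith : n - (T.card + A.card) = (U.card - T.card) + B.card := by omega
    rw [harith, pow_add, pow_add]
    ring
  rw [Finset.sum_congr rfl step, ← Finset.mul_sum, sum_pow_powerset, hpq, one_pow, mul_one]


section AuxMain
variable {V : Type} [Fintype V] [DecidableEq V]

-- q^(k-2) ≥ 1/3 where q = 1 - 1/k
lemma q_pow_ge (k : ℕ) (hk : 2 ≤ k) : (1/3 : ℝ) ≤ (1 - 1/(k:ℝ)) ^ (k - 2) := by
  have hk1 : (1:ℝ) ≤ (k:ℝ) - 1 := by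
    have : (2:ℝ) ≤ (k:ℝ) := by exact_mod_cast hk
    linarith
  set x : ℝ := 1 / ((k:ℝ) - 1) with hx
  have hx0 : 0 < x := by positivity
  have hq : (1 - 1/(k:ℝ)) = ((k:ℝ) - 1)/(k:ℝ) := by
    field_simp
  have hexpq : Real.exp (-x) ≤ 1 - 1/(k:ℝ) := by
    rw [Real.exp_neg]
    rw [inv_le_comm₀ (Real.exp_pos x) (by rw [hq]; positivity)]
    calc ((1 - 1/(k:ℝ)))⁻¹ = 1 + x := by
          rw [hq, hx]; field_simp; ring
      _ ≤ Real.exp x := by linarith [Real.add_one_le_exp x]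
  calc (1/3 : ℝ) ≤ Real.exp (-1) := by
        rw [Real.exp_neg, one_div]
        apply inv_anti₀ (Real.exp_pos 1)
        calc Real.exp 1 ≤ 2.7182818286 := (Real.exp_one_lt_d9).le
          _ ≤ 3 := by norm_num
    _ ≤ Real.exp (-(x * (k - 2 : ℕ))) := by
        apply Real.exp_le_exp.2
        have : x * ((k:ℕ) - 2 : ℕ) ≤ 1 := by
          have h2 : ((k - 2 : ℕ) : ℝ) = (k:ℝ) - 2 := by
            have : (2:ℕ) ≤ k := hk
            push_cast [Nat.cast_sub this]; ring
          rw [h2, hx]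
          rw [div_mul_eq_mul_div, div_le_one (by linarith)]
          linarith
        linarith
    _ = Real.exp (-x) ^ (k - 2) := by
        rw [← Real.exp_nat_mul]; ring_nf
    _ ≤ (1 - 1/(k:ℝ)) ^ (k - 2) := by
        apply pow_le_pow_left₀ (Real.exp_pos _).le hexpq
end AuxMain



/-- The Delaunay edges of the subhypergraph of `(V, E)` induced on `S`:
pairs `{u, v} ⊆ S` that arise as `e ∩ S` for some hyperedge `e ∈ E`. -/
def delaunayPairs {V : Type} [DecidableEq V] (E : Finset (Finset V)) (S : Finset V) :
    Set (Finset V) :=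
  {p | p.card = 2 ∧ ∃ e ∈ E, e ∩ S = p}

/-- The hypergraph `(V, E)` admits a hereditarily `c`-linear Delaunay graph. -/
def HerLinearDelaunay {V : Type} [DecidableEq V] (c : ℝ) (E : Finset (Finset V)) : Prop :=
  ∀ S : Finset V, S.Nonempty → ((delaunayPairs E S).ncard : ℝ) < c * S.card

/-- The pairs of vertices that are friends. -/
def friendPairs {V : Type} [DecidableEq V] (E : Finset (Finset V)) : Set (Finset V) :=
  {p | p.card = 2 ∧ ∃ e ∈ E, p ⊆ e}

/-- In a hypergraph with a hereditarily `c`-linear Delaunay graph whose hyperedges all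
have size at most `k`, the number of friend pairs is at most `C · c · n · k`. -/
theorem friendPairs_card_le :
    ∃ C : ℝ, 0 < C ∧
      ∀ (V : Type) [Fintype V] [DecidableEq V] (E : Finset (Finset V)) (c : ℝ) (k : ℕ),
        0 < c → 2 ≤ k →
        (∀ e ∈ E, e.card ≤ k) →
        HerLinearDelaunay c E →
        ((friendPairs E).ncard : ℝ) ≤ C * c * (Fintype.card V) * k := by
  
  refine ⟨3, by norm_num, ?_⟩
  intro V _ _ E c k hc hk hE hHer
  classical
  set n := Fintype.card V with hn
  have hk0 : (0:ℝ) < (k:ℝ) := by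
    have : (2:ℝ) ≤ (k:ℝ) := by exact_mod_cast hk
    linarith
  set p : ℝ := 1 / (k:ℝ) with hpdef
  set q : ℝ := 1 - p with hqdef
  have hp0 : 0 < p := by positivity
  have hq0 : 0 ≤ q := by
    have : p ≤ 1/2 := by
      rw [hpdef]
      rw [div_le_div_iff₀ hk0 (by norm_num)]
      have : (2:ℝ) ≤ (k:ℝ) := by exact_mod_cast hk
      linarith
    rw [hqdef]; linarith
  have hq1 : q ≤ 1 := by rw [hqdef]; linarith
  have hpq : p + q = 1 := by rw [hqdef]; ring
  set w : Finset V → ℝ := fun S => p ^ S.card * q ^ (n - S.card) with hw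
  have hw0 : ∀ S : Finset V, 0 ≤ w S := fun S => by positivity
  set D : Finset V → Finset (Finset V) :=
    fun S => Finset.univ.filter (fun pr => pr.card = 2 ∧ ∃ e ∈ E, e ∩ S = pr) with hD
  have hDcard : ∀ S : Finset V, (delaunayPairs E S).ncard = (D S).card := by
    intro S
    have : delaunayPairs E S = ↑(D S) := by
      ext pr; simp [delaunayPairs, hD]
    rw [this, Set.ncard_coe_finset]
  set Ffin : Finset (Finset V) :=
    Finset.univ.filter (fun pr => pr.card = 2 ∧ ∃ e ∈ E, pr ⊆ e) with hFfin
  have hFcard : (friendPairs E).ncard = Ffin.card := by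
    have : friendPairs E = ↑Ffin := by
      ext pr; simp [friendPairs, hFfin]
    rw [this, Set.ncard_coe_finset]
  -- expected size of S
  have hExp : ∑ S : Finset V, w S * S.card = (n:ℝ) * p := by
    calc ∑ S : Finset V, w S * S.card
        = ∑ S : Finset V, ∑ v : V, (if v ∈ S then w S else 0) := by
          refine Finset.sum_congr rfl fun S _ => ?_
          rw [Finset.sum_ite_mem, Finset.univ_inter, Finset.sum_const, nsmul_eq_mul, mul_comm]
      _ = ∑ v : V, ∑ S : Finset V, (if v ∈ S then w S else 0) := Finset.sum_comm
      _ = ∑ v : V, p := by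
          refine Finset.sum_congr rfl fun v _ => ?_
          have hfe : Finset.univ.filter
              (fun S : Finset V => ({v}:Finset V) ⊆ S ∧ Disjoint S (∅:Finset V))
              = Finset.univ.filter (fun S : Finset V => v ∈ S) := by
            apply Finset.filter_congr; intro S _; simp
          have h := interval_weight ({v}:Finset V) (∅:Finset V)
            (Finset.disjoint_empty_right _) p q hpq
          rw [hfe] at h
          simp only [Finset.card_singleton, Finset.card_empty, pow_one, pow_zero, mul_one] at h
          rw [← h, Finset.sum_filter]
      _ = (n:ℝ) * p := by
          rw [Finset.sum_const, Finset.card_univ, nsmul_eq_mul, hn]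
  -- upper bound on total weighted delaunay count
  have hUB : ∑ S : Finset V, w S * (D S).card ≤ c * ((n:ℝ) * p) := by
    have h1 : ∀ S : Finset V, w S * (D S).card ≤ c * (w S * S.card) := by
      intro S
      rcases S.eq_empty_or_nonempty with rfl | hS
      · have hDe : D ∅ = ∅ := by
          rw [hD]; ext pr
          simp only [Finset.mem_filter, Finset.mem_univ, true_and, Finset.notMem_empty,
            iff_false, not_and]
          rintro h2 ⟨e, he, hint⟩
          rw [Finset.inter_empty] at hint
          rw [← hint] at h2; simp at h2
        simp [hDe]
      · have h2 : ((D S).card : ℝ) ≤ c * S.card := by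
          rw [← hDcard]; exact (hHer S hS).le
        calc w S * (D S).card ≤ w S * (c * S.card) :=
              mul_le_mul_of_nonneg_left h2 (hw0 S)
          _ = c * (w S * S.card) := by ring
    calc ∑ S : Finset V, w S * (D S).card ≤ ∑ S : Finset V, c * (w S * S.card) :=
          Finset.sum_le_sum fun S _ => h1 S
      _ = c * ∑ S : Finset V, w S * S.card := by rw [← Finset.mul_sum]
      _ = c * ((n:ℝ) * p) := by rw [hExp]
  -- swap sums
  have hswap : ∑ S : Finset V, w S * (D S).card
      = ∑ pr : Finset V, ∑ S : Finset V, (if pr ∈ D S then w S else 0) := by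
    have h1 : ∀ S : Finset V, w S * (D S).card
        = ∑ pr : Finset V, (if pr ∈ D S then w S else 0) := by
      intro S
      rw [Finset.sum_ite_mem, Finset.univ_inter, Finset.sum_const, nsmul_eq_mul, mul_comm]
    rw [Finset.sum_congr rfl fun S _ => h1 S, Finset.sum_comm]
  -- lower bound
  have hLB : (Ffin.card : ℝ) * (p^2 * q^(k-2)) ≤ ∑ S : Finset V, w S * (D S).card := by
    rw [hswap]
    have hpair : ∀ pr ∈ Ffin,
        p^2 * q^(k-2) ≤ ∑ S : Finset V, (if pr ∈ D S then w S else 0) := by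
      intro pr hpr
      rw [hFfin, Finset.mem_filter] at hpr
      obtain ⟨-, hpr2, e, he, hsub⟩ := hpr
      have hek : e.card ≤ k := hE e he
      have hpre : pr.card ≤ e.card := Finset.card_le_card hsub
      have hdisj : Disjoint pr (e \ pr) := Finset.disjoint_sdiff
      have hiw := interval_weight pr (e \ pr) hdisj p q hpq
      have hsubset : Finset.univ.filter (fun S : Finset V => pr ⊆ S ∧ Disjoint S (e \ pr))
          ⊆ Finset.univ.filter (fun S : Finset V => pr ∈ D S) := by
        intro S hS
        rw [Finset.mem_filter] at hS ⊢
        refine ⟨hS.1, ?_⟩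
        rw [hD]; simp only [Finset.mem_filter, Finset.mem_univ, true_and]
        refine ⟨hpr2, e, he, ?_⟩
        apply Finset.Subset.antisymm
        · intro x hx
          rw [Finset.mem_inter] at hx
          by_contra hxp
          exact (Finset.disjoint_right.1 hS.2.2) (Finset.mem_sdiff.2 ⟨hx.1, hxp⟩) hx.2
        · intro x hx
          exact Finset.mem_inter.2 ⟨hsub hx, hS.2.1 hx⟩
      calc p^2 * q^(k-2) ≤ p^pr.card * q^((e \ pr).card) := by
            rw [hpr2]
            apply mul_le_mul_of_nonneg_left _ (by positivity)
            rw [Finset.card_sdiff_of_subset hsub, hpr2]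
            exact pow_le_pow_of_le_one hq0 hq1 (by omega)
        _ = ∑ S ∈ Finset.univ.filter (fun S : Finset V => pr ⊆ S ∧ Disjoint S (e \ pr)), w S :=
            hiw.symm
        _ ≤ ∑ S ∈ Finset.univ.filter (fun S : Finset V => pr ∈ D S), w S :=
            Finset.sum_le_sum_of_subset_of_nonneg hsubset (fun S _ _ => hw0 S)
        _ = ∑ S : Finset V, (if pr ∈ D S then w S else 0) := Finset.sum_filter _ _
    calc (Ffin.card:ℝ) * (p^2 * q^(k-2)) = ∑ _pr ∈ Ffin, p^2*q^(k-2) := by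
          rw [Finset.sum_const, nsmul_eq_mul]
      _ ≤ ∑ pr ∈ Ffin, ∑ S : Finset V, (if pr ∈ D S then w S else 0) :=
          Finset.sum_le_sum hpair
      _ ≤ ∑ pr : Finset V, ∑ S : Finset V, (if pr ∈ D S then w S else 0) :=
          Finset.sum_le_sum_of_subset_of_nonneg (Finset.subset_univ _)
            (fun pr _ _ => Finset.sum_nonneg fun S _ => by
              by_cases h : pr ∈ D S <;> simp [h, hw0 S])
  -- q^(k-2) ≥ 1/3
  have hq3 : (1/3 : ℝ) ≤ q ^ (k-2) := by
    rw [hqdef, hpdef]; exact q_pow_ge k hk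
  -- finish
  rw [hFcard]
  have hfinal : (Ffin.card : ℝ) * (p^2 * (1/3)) ≤ c * ((n:ℝ) * p) := by
    refine le_trans ?_ (le_trans hLB hUB)
    apply mul_le_mul_of_nonneg_left _ (Nat.cast_nonneg _)
    exact mul_le_mul_of_nonneg_left hq3 (by positivity)
  have hpk : p * (k:ℝ) = 1 := by rw [hpdef]; field_simp
  have h2 := mul_le_mul_of_nonneg_right hfinal (by positivity : (0:ℝ) ≤ 3*(k:ℝ)^2)
  calc ((Ffin.card:ℝ)) = (Ffin.card:ℝ) * (p^2*(1/3)) * (3*(k:ℝ)^2) := by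
        have e1 : p^2*(1/3)*(3*(k:ℝ)^2) = (p*(k:ℝ))^2 := by ring
        rw [mul_assoc, e1, hpk, one_pow, mul_one]
    _ ≤ c*((n:ℝ)*p)*(3*(k:ℝ)^2) := h2
    _ = 3*c*(n:ℝ)*(k:ℝ)*(p*(k:ℝ)) := by ring
    _ = 3*c*(n:ℝ)*(k:ℝ) := by rw [hpk, mul_one]
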